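/- If H₁,…,H₃ are 3×5 matrices over F₂ whose syndrome map is injective on the 3-terminal Hamming sources of length 5, then null(H₁) contains no vector of Hamming weight 1 or 2, and hence every nonzero vector of null(H₁) has weight 3 or 4. -/

import Mathlib

/-- Hamming weight of a binary vector. -/
def wt {n : ℕ} (v : Fin n → ZMod 2) : ℕ := (Finset.univ.filter fun j => v j ≠ 0).card

/-- The set of `s`-terminal Hamming sources of length `n`. -/
def hammingS (s n : ℕ) : Set (Fin s → Fin n → ZMod 2) :=
  {x | ∃ (b : Fin n → ZMod 2) (v : Fin s → Fin n → ZMod 2),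
    (∀ i, x i = b + v i) ∧ (∑ i, wt (v i)) ≤ 1}

lemma zmod2_one_add (a : ZMod 2) : 1 + a ≠ 0 ↔ a = 0 := by revert a; decide

lemma zmod2_eq_one {a : ZMod 2} (h : a ≠ 0) : a = 1 := by revert h; revert a; decide

lemma wt_zero (n : ℕ) : wt (0 : Fin n → ZMod 2) = 0 := by
  simp [wt]

lemma wt_single {n : ℕ} (i : Fin n) : wt (Pi.single i (1 : ZMod 2)) = 1 := by
  unfold wt
  have : (Finset.univ.filter fun j => (Pi.single i 1 : Fin n → ZMod 2) j ≠ 0) = {i} := by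
    ext j
    by_cases h : j = i <;> simp [Pi.single_apply, h]
  rw [this]; simp

lemma mem_hammingS_of_wt_le_one {u : Fin 5 → ZMod 2} (h : wt u ≤ 1) :
    (![u, 0, 0] : Fin 3 → Fin 5 → ZMod 2) ∈ hammingS 3 5 := by
  refine ⟨0, ![u, 0, 0], fun i => by simp, ?_⟩
  rw [Fin.sum_univ_three]
  simpa [wt_zero] using h

/-- If `H₁, H₂, H₃` are `3×5` matrices over `F₂` whose syndrome map is injective on the
3-terminal Hamming sources of length 5, then `null(H₁)` contains no vector of Hamming
weight 1 or 2, and hence every nonzero vector of `null(H₁)` has weight 3 or 4. -/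
theorem stmt_12
    (H₁ H₂ H₃ : Matrix (Fin 3) (Fin 5) (ZMod 2))
    (hinj : Set.InjOn
      (fun x : Fin 3 → Fin 5 → ZMod 2 => (H₁.mulVec (x 0), H₂.mulVec (x 1), H₃.mulVec (x 2)))
      (hammingS 3 5)) :
    (∀ x : Fin 5 → ZMod 2, H₁.mulVec x = 0 → wt x ≠ 1 ∧ wt x ≠ 2) ∧
    (∀ x : Fin 5 → ZMod 2, H₁.mulVec x = 0 → x ≠ 0 → wt x = 3 ∨ wt x = 4) := by
  -- Key: if two vectors of weight ≤ 1 have the same H₁-syndrome, they are equal.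
  have key : ∀ u w : Fin 5 → ZMod 2, wt u ≤ 1 → wt w ≤ 1 →
      H₁.mulVec u = H₁.mulVec w → u = w := by
    intro u w hu hw hsyn
    have h := hinj (mem_hammingS_of_wt_le_one hu) (mem_hammingS_of_wt_le_one hw)
      (by simp [hsyn])
    have := congrFun h 0
    simpa using this
  have part1 : ∀ x : Fin 5 → ZMod 2, H₁.mulVec x = 0 → wt x ≠ 1 ∧ wt x ≠ 2 := by
    intro x hx
    constructor
    · intro h1
      have : x = 0 := by
        have := key x 0 (le_of_eq h1) (by simp [wt_zero]) (by simp [hx])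
        exact this
      rw [this, wt_zero] at h1; omega
    · intro h2
      obtain ⟨i, j, hij, hset⟩ := Finset.card_eq_two.mp h2
      have hxi : x i = 1 := by
        have : i ∈ Finset.univ.filter fun j => x j ≠ 0 := by rw [hset]; simp
        exact zmod2_eq_one (by simpa using this)
      have hxj : x j = 1 := by
        have : j ∈ Finset.univ.filter fun j => x j ≠ 0 := by rw [hset]; simp
        exact zmod2_eq_one (by simpa using this)
      set u := (Pi.single i 1 : Fin 5 → ZMod 2) with hu
      set w := (Pi.single j 1 : Fin 5 → ZMod 2) with hw
      have hxuw : x = u + w := by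
        funext k
        by_cases hki : k = i
        · subst hki
          simp [hu, hw, hxi, Pi.single_apply, Ne.symm hij]
        · by_cases hkj : k = j
          · subst hkj
            simp [hu, hw, hxj, Pi.single_apply, hij]
          · have hk0 : x k = 0 := by
              by_contra hk
              have : k ∈ Finset.univ.filter fun j => x j ≠ 0 := by simp [hk]
              rw [hset] at this
              simp at this
              tauto
            simp [hu, hw, hk0, Pi.single_apply, hki, hkj]
      -- H₁ u = H₁ w
      have hsum : H₁.mulVec u + H₁.mulVec w = 0 := by
        rw [← Matrix.mulVec_add, ← hxuw, hx]
      have hsyn : H₁.mulVec u = H₁.mulVec w := by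
        funext k
        have := congrFun hsum k
        simp [Pi.add_apply] at this
        revert this
        generalize H₁.mulVec u k = a
        generalize H₁.mulVec w k = b
        revert a b; decide
      have := key u w (le_of_eq (wt_single i)) (le_of_eq (wt_single j)) hsyn
      have := congrFun this i
      simp [hu, hw, Pi.single_apply, Ne.symm hij] at this
  refine ⟨part1, ?_⟩
  intro x hx hx0
  have hle : wt x ≤ 5 := by
    have := Finset.card_filter_le (Finset.univ : Finset (Fin 5)) (fun j => x j ≠ 0)
    simpa [wt] using this
  have hne0 : wt x ≠ 0 := by
    intro h
    apply hx0
    funext k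
    show x k = (0 : ZMod 2)
    by_contra hk
    have : k ∈ Finset.univ.filter fun j => x j ≠ 0 := by simp [hk]
    rw [Finset.card_eq_zero.mp h] at this
    simp at this
  have ⟨h1, h2⟩ := part1 x hx
  -- exclude weight 5
  have hne5 : wt x ≠ 5 := by
    intro h5
    -- x is the all-ones vector
    have hall : ∀ j, x j = 1 := by
      intro j
      have huniv : (Finset.univ.filter fun j => x j ≠ 0) = Finset.univ :=
        Finset.eq_univ_of_card _ (by simpa [wt] using h5)
      have : j ∈ Finset.univ.filter fun j => x j ≠ 0 := by rw [huniv]; simp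
      exact zmod2_eq_one (by simpa using this)
    -- the kernel has dimension ≥ 2
    set K := LinearMap.ker H₁.mulVecLin with hK
    have hrank : Module.finrank (ZMod 2) (LinearMap.range H₁.mulVecLin)
        + Module.finrank (ZMod 2) K = 5 := by
      have := LinearMap.finrank_range_add_finrank_ker H₁.mulVecLin
      simpa using this
    have hrle : Module.finrank (ZMod 2) (LinearMap.range H₁.mulVecLin) ≤ 3 := by
      have := Submodule.finrank_le (LinearMap.range H₁.mulVecLin)
      simpa using this
    have hK2 : 2 ≤ Module.finrank (ZMod 2) K := by omega
    -- get y in K outside span {x}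
    have hnotle : ¬ K ≤ Submodule.span (ZMod 2) {x} := by
      intro hle'
      have := Submodule.finrank_mono hle'
      have hsx : Module.finrank (ZMod 2) (Submodule.span (ZMod 2) {x}) = 1 :=
        finrank_span_singleton hx0
      omega
    obtain ⟨y, hyK, hyns⟩ : ∃ y ∈ K, y ∉ Submodule.span (ZMod 2) {x} := by
      by_contra hcon
      push_neg at hcon
      exact hnotle fun b hb => hcon b hb
    have hy1 : H₁.mulVec y = 0 := by
      have := LinearMap.mem_ker.mp hyK
      simpa [Matrix.mulVecLin_apply] using this
    have hy0 : y ≠ 0 := by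
      intro h; apply hyns; rw [h]; exact Submodule.zero_mem _
    have hyx : y ≠ x := by
      intro h; apply hyns; rw [h]; exact Submodule.mem_span_singleton_self x
    have hyle : wt y ≤ 5 := by
      have := Finset.card_filter_le (Finset.univ : Finset (Fin 5)) (fun j => y j ≠ 0)
      simpa [wt] using this
    have hyne0 : wt y ≠ 0 := by
      intro h
      apply hy0
      funext k
      show y k = (0 : ZMod 2)
      by_contra hk
      have : k ∈ Finset.univ.filter fun j => y j ≠ 0 := by simp [hk]
      rw [Finset.card_eq_zero.mp h] at this
      simp at this
    have ⟨hy1', hy2'⟩ := part1 y hy1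
    have hyne5 : wt y ≠ 5 := by
      intro h5y
      apply hyx
      have huniv : (Finset.univ.filter fun j => y j ≠ 0) = Finset.univ :=
        Finset.eq_univ_of_card _ (by simpa [wt] using h5y)
      funext k
      have : k ∈ Finset.univ.filter fun j => y j ≠ 0 := by rw [huniv]; simp
      have hyk : y k = 1 := zmod2_eq_one (by simpa using this)
      rw [hyk, hall k]
    -- now consider z = x + y
    have hz : H₁.mulVec (x + y) = 0 := by
      rw [Matrix.mulVec_add, hx, hy1, add_zero]
    have hfilt : (Finset.univ.filter fun j => (x + y) j ≠ 0)
        = (Finset.univ.filter fun j => y j ≠ 0)ᶜ := by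
      rw [Finset.compl_filter]
      ext j
      simp only [Finset.mem_filter, Finset.mem_univ, true_and, Pi.add_apply, hall j, not_not,
        zmod2_one_add]
    have hwz : wt (x + y) = 5 - wt y := by
      unfold wt
      rw [hfilt, Finset.card_compl]
      simp [wt]
    have ⟨hz1, hz2⟩ := part1 (x + y) hz
    omega
  omega
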